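/- Let G_ω be a weighted graph. Then I(G_ω) equals the intersection of the ideals P(V', δ') taken over all weighted vertex covers (V', δ') of G_ω, and also equals the intersection of the ideals P(V', δ') taken over all minimal weighted vertex covers (V', δ') of G_ω. Moreover the second decomposition is irredundant: there are no containment relations between the ideals P(V', δ') for distinct minimal weighted vertex covers (V', δ'). -/

import Mathlib

open MvPolynomial

/-- `(S, δ)` is a weighted vertex cover of the weighted graph `(G, w)`:
`δ` takes positive values on `S`, and every edge `{i, j}` is covered by an
endpoint lying in `S` whose weight is at most the weight of the edge. -/
def IsWVC {V : Type*} (G : SimpleGraph V) (w : Sym2 V → ℕ) (S : Finset V) (δ : V → ℕ) : Prop :=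
  (∀ v ∈ S, 1 ≤ δ v) ∧
    ∀ i j, G.Adj i j → (i ∈ S ∧ δ i ≤ w s(i, j)) ∨ (j ∈ S ∧ δ j ≤ w s(i, j))

/-- The order on weighted vertex covers: `(S', δ') ≤ (S, δ)` iff `S' ⊆ S` and
`δ v ≤ δ' v` for all `v ∈ S'`. -/
def WVCle {V : Type*} (S' : Finset V) (δ' : V → ℕ) (S : Finset V) (δ : V → ℕ) : Prop :=
  S' ⊆ S ∧ ∀ v ∈ S', δ v ≤ δ' v

/-- Minimal weighted vertex cover. -/
def IsMinWVC {V : Type*} (G : SimpleGraph V) (w : Sym2 V → ℕ) (S : Finset V) (δ : V → ℕ) :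
    Prop :=
  IsWVC G w S δ ∧ ∀ T ε, IsWVC G w T ε → WVCle T ε S δ → WVCle S δ T ε

/-- A weighted graph is unmixed if all its minimal weighted vertex covers have
the same cardinality. -/
def WUnmixed {V : Type*} (G : SimpleGraph V) (w : Sym2 V → ℕ) : Prop :=
  ∀ S δ T ε, IsMinWVC G w S δ → IsMinWVC G w T ε → S.card = T.card

/-- vertex cover of an (unweighted) graph. -/
def IsVC {V : Type*} (G : SimpleGraph V) (S : Finset V) : Prop :=
  ∀ i j, G.Adj i j → i ∈ S ∨ j ∈ S

def IsMinVC {V : Type*} (G : SimpleGraph V) (S : Finset V) : Prop :=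
  IsVC G S ∧ ∀ T, IsVC G T → T ⊆ S → T = S

def Unmixed {V : Type*} (G : SimpleGraph V) : Prop :=
  ∀ S T, IsMinVC G S → IsMinVC G T → S.card = T.card

/-- The weighted edge ideal. -/
noncomputable def wEdgeIdeal (A : Type*) [CommRing A] {V : Type*} (G : SimpleGraph V)
    (w : Sym2 V → ℕ) : Ideal (MvPolynomial V A) :=
  Ideal.span {m | ∃ i j, G.Adj i j ∧ m = X i ^ w s(i, j) * X j ^ w s(i, j)}

/-- The m-irreducible ideal `P(S, δ)` generated by the pure powers `Xᵥ^(δ v)`, `v ∈ S`. -/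
noncomputable def PIdeal (A : Type*) [CommRing A] {V : Type*} (S : Finset V) (δ : V → ℕ) :
    Ideal (MvPolynomial V A) :=
  Ideal.span {m | ∃ v ∈ S, m = X v ^ δ v}

/-- The monomial prime `P(S)` generated by the variables `Xᵥ`, `v ∈ S`. -/
noncomputable def PPrime (A : Type*) [CommRing A] {V : Type*} (S : Finset V) :
    Ideal (MvPolynomial V A) :=
  Ideal.span {m | ∃ v ∈ S, m = X v}

set_option synthInstance.maxHeartbeats 1000000 in
/-- Cohen-Macaulayness of the quotient of a polynomial ring over a field by a
(monomial, hence graded) ideal `I`: there is a regular sequence on `R ⧸ I`,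
consisting of elements of the image of the irrelevant maximal ideal, whose
length equals the Krull dimension of `R ⧸ I` (i.e. `depth = dim`). -/
def QuotIsCM (A : Type*) [Field A] {V : Type*} (I : Ideal (MvPolynomial V A)) : Prop :=
  ∃ rs : List (MvPolynomial V A ⧸ I),
    (∀ x ∈ rs, x ∈ (Ideal.span (Set.range (X : V → MvPolynomial V A))).map
      (Ideal.Quotient.mk I)) ∧
    RingTheory.Sequence.IsRegular (MvPolynomial V A ⧸ I) rs ∧
    (rs.length : WithBot (WithTop ℕ)) = ringKrullDim (MvPolynomial V A ⧸ I)

/-- The cycle graph on `Fin n`. -/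
def cycleG (n : ℕ) : SimpleGraph (Fin n) := SimpleGraph.fromRel (fun i j => (j : ℕ) = ((i : ℕ) + 1) % n)

/-- The path graph on `Fin n`, with edges `v_i v_{i+1}`. -/
def pathG (n : ℕ) : SimpleGraph (Fin n) :=
  SimpleGraph.fromRel (fun i j => (i : ℕ) + 1 = (j : ℕ))

/-- The suspension of a graph `G`, obtained by attaching a whisker `vᵢwᵢ` at
each vertex `vᵢ` of `G`; the copy `Sum.inl` carries `G` and `Sum.inr` carries
the whisker vertices. -/
def suspension {V : Type*} (G : SimpleGraph V) : SimpleGraph (V ⊕ V) :=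
  SimpleGraph.fromRel (fun x y =>
    match x, y with
    | .inl i, .inl j => G.Adj i j
    | .inl i, .inr j => i = j
    | _, _ => False)


section Aux4

open Finsupp

variable {V : Type*}

lemma WVCle.trans' {S1 S2 S3 : Finset V} {d1 d2 d3 : V → ℕ}
    (h12 : WVCle S1 d1 S2 d2) (h23 : WVCle S2 d2 S3 d3) : WVCle S1 d1 S3 d3 :=
  ⟨h12.1.trans h23.1, fun v hv => (h23.2 v (h12.1 hv)).trans (h12.2 v hv)⟩

lemma WVCle.refl' (S : Finset V) (d : V → ℕ) : WVCle S d S d :=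
  ⟨Finset.Subset.refl _, fun _ _ => le_rfl⟩

/-- Every weighted vertex cover dominates a minimal weighted vertex cover. -/
lemma exists_min_below [Fintype V] (G : SimpleGraph V) (w : Sym2 V → ℕ)
    {S : Finset V} {δ : V → ℕ} (h : IsWVC G w S δ) :
    ∃ T ε, IsMinWVC G w T ε ∧ WVCle T ε S δ := by
  classical
  obtain ⟨W, hW⟩ : ∃ W, ∀ i j : V, w s(i, j) ≤ W :=
    ⟨(Finset.univ ×ˢ Finset.univ : Finset (V × V)).sup (fun p => w s(p.1, p.2)),
      fun i j => Finset.le_sup (f := fun p : V × V => w s(p.1, p.2)) (b := (i, j))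
        (Finset.mem_product.mpr ⟨Finset.mem_univ _, Finset.mem_univ _⟩)⟩
  have trunc : ∀ (T : Finset V) (ε : V → ℕ), IsWVC G w T ε →
      IsWVC G w (T.filter (fun v => ε v ≤ W)) ε ∧
        WVCle (T.filter (fun v => ε v ≤ W)) ε T ε := by
    intro T ε hT
    refine ⟨⟨fun v hv => hT.1 v (Finset.mem_filter.mp hv).1, ?_⟩,
      Finset.filter_subset _ _, fun v _ => le_rfl⟩
    intro i j hij
    rcases hT.2 i j hij with ⟨hi, hle⟩ | ⟨hj, hle⟩
    · exact Or.inl ⟨Finset.mem_filter.mpr ⟨hi, hle.trans (hW i j)⟩, hle⟩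
    · exact Or.inr ⟨Finset.mem_filter.mpr ⟨hj, hle.trans (hW i j)⟩, hle⟩
  have main : ∀ (n : ℕ) (T : Finset V) (ε : V → ℕ), IsWVC G w T ε → (∀ v ∈ T, ε v ≤ W) →
      (∑ v ∈ T, (W + 1 - ε v)) ≤ n → ∃ M ρ, IsMinWVC G w M ρ ∧ WVCle M ρ T ε := by
    intro n
    induction n using Nat.strong_induction_on with
    | _ n ih =>
      intro T ε hT hb hsum
      by_cases hmin : IsMinWVC G w T ε
      · exact ⟨T, ε, hmin, WVCle.refl' T ε⟩
      · rw [IsMinWVC] at hmin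
        push_neg at hmin
        obtain ⟨T', ε', hT', hle, hnle⟩ := hmin hT
        set T'' := T'.filter (fun v => ε' v ≤ W) with hT''def
        obtain ⟨hcov'', hle''⟩ := trunc T' ε' hT'
        have hle2 : WVCle T'' ε' T ε := WVCle.trans' hle'' hle
        have hnle2 : ¬ WVCle T ε T'' ε' := by
          intro hc
          exact hnle ⟨hc.1.trans (Finset.filter_subset _ _), hc.2⟩
        have hb'' : ∀ v ∈ T'', ε' v ≤ W := fun v hv => (Finset.mem_filter.mp hv).2
        have hdec : (∑ v ∈ T'', (W + 1 - ε' v)) < ∑ v ∈ T, (W + 1 - ε v) := by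
          have hsub : T'' ⊆ T := hle2.1
          have hpt : ∀ v ∈ T'', ε v ≤ ε' v := hle2.2
          by_cases hTT : T ⊆ T''
          · have heq : T'' = T := Finset.Subset.antisymm hsub hTT
            have hex : ∃ v ∈ T, ε v < ε' v := by
              by_contra hc
              push_neg at hc
              exact hnle2 ⟨hTT, fun v hv => hc v hv⟩
            obtain ⟨v0, hv0, hv0lt⟩ := hex
            rw [heq]
            refine Finset.sum_lt_sum (fun i hi => ?_) ⟨v0, hv0, ?_⟩
            · have := hpt i (heq ▸ hi)
              omega
            · have h1 := hb v0 hv0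
              omega
          · obtain ⟨u, huT, huT''⟩ := Finset.not_subset.mp hTT
            calc (∑ v ∈ T'', (W + 1 - ε' v)) ≤ ∑ v ∈ T'', (W + 1 - ε v) :=
                  Finset.sum_le_sum (fun i hi => by have := hpt i hi; omega)
              _ < ∑ v ∈ T, (W + 1 - ε v) := by
                  refine Finset.sum_lt_sum_of_subset hsub huT huT'' ?_ (fun j _ _ => Nat.zero_le _)
                  have := hb u huT
                  omega
        obtain ⟨M, ρ, hM, hMle⟩ := ih (∑ v ∈ T'', (W + 1 - ε' v)) (lt_of_lt_of_le hdec hsum)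
          T'' ε' hcov'' hb'' le_rfl
        exact ⟨M, ρ, hM, WVCle.trans' hMle hle2⟩
  obtain ⟨hcov0, hle0⟩ := trunc S δ h
  obtain ⟨M, ρ, hM, hMle⟩ := main (∑ v ∈ S.filter (fun v => δ v ≤ W), (W + 1 - δ v)) _ _
    hcov0 (fun v hv => (Finset.mem_filter.mp hv).2) le_rfl
  exact ⟨M, ρ, hM, WVCle.trans' hMle hle0⟩

lemma mem_PIdeal_iff {A : Type*} [CommRing A] {S : Finset V} {δ : V → ℕ}
    {f : MvPolynomial V A} :
    f ∈ PIdeal A S δ ↔ ∀ m ∈ f.support, ∃ v ∈ S, δ v ≤ m v := by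
  classical
  have hset : PIdeal A S δ = Ideal.span ((fun s => monomial s (1 : A)) ''
      {s | ∃ v ∈ S, s = Finsupp.single v (δ v)}) := by
    unfold PIdeal
    congr 1
    ext g
    constructor
    · rintro ⟨v, hv, rfl⟩
      exact ⟨Finsupp.single v (δ v), ⟨v, hv, rfl⟩, X_pow_eq_monomial.symm⟩
    · rintro ⟨s, ⟨v, hv, rfl⟩, rfl⟩
      exact ⟨v, hv, X_pow_eq_monomial.symm⟩
  rw [hset, mem_ideal_span_monomial_image]
  constructor
  · intro h m hm
    obtain ⟨s, ⟨v, hv, rfl⟩, hle⟩ := h m hm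
    exact ⟨v, hv, Finsupp.single_le_iff.mp hle⟩
  · intro h m hm
    obtain ⟨v, hv, hle⟩ := h m hm
    exact ⟨_, ⟨v, hv, rfl⟩, Finsupp.single_le_iff.mpr hle⟩

lemma mem_wEdgeIdeal_iff {A : Type*} [CommRing A] {G : SimpleGraph V} {w : Sym2 V → ℕ}
    {f : MvPolynomial V A} :
    f ∈ wEdgeIdeal A G w ↔
      ∀ m ∈ f.support, ∃ i j, G.Adj i j ∧ w s(i, j) ≤ m i ∧ w s(i, j) ≤ m j := by
  classical
  have hset : wEdgeIdeal A G w = Ideal.span ((fun s => monomial s (1 : A)) ''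
      {s | ∃ i j, G.Adj i j ∧
        s = Finsupp.single i (w s(i, j)) + Finsupp.single j (w s(i, j))}) := by
    unfold wEdgeIdeal
    congr 1
    ext g
    constructor
    · rintro ⟨i, j, hij, rfl⟩
      refine ⟨_, ⟨i, j, hij, rfl⟩, ?_⟩
      rw [X_pow_eq_monomial, X_pow_eq_monomial, monomial_mul, one_mul]
    · rintro ⟨s, ⟨i, j, hij, rfl⟩, rfl⟩
      exact ⟨i, j, hij, by rw [X_pow_eq_monomial, X_pow_eq_monomial, monomial_mul, one_mul]⟩
  have key : ∀ (i j : V), i ≠ j → ∀ m : V →₀ ℕ,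
      (Finsupp.single i (w s(i, j)) + Finsupp.single j (w s(i, j)) ≤ m ↔
        w s(i, j) ≤ m i ∧ w s(i, j) ≤ m j) := by
    intro i j hij m
    rw [Finsupp.le_def]
    constructor
    · intro h
      refine ⟨?_, ?_⟩
      · have := h i
        simpa [Finsupp.single_apply, Ne.symm hij] using this
      · have := h j
        simpa [Finsupp.single_apply, hij] using this
    · rintro ⟨h1, h2⟩ x
      simp only [Finsupp.add_apply, Finsupp.single_apply]
      split_ifs with hxi hxj hxj
      · exact absurd (hxi.trans hxj.symm) hij
      · subst hxi
        simpa using h1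
      · subst hxj
        simpa using h2
      · simp
  rw [hset, mem_ideal_span_monomial_image]
  constructor
  · intro h m hm
    obtain ⟨s, ⟨i, j, hij, rfl⟩, hle⟩ := h m hm
    exact ⟨i, j, hij, (key i j hij.ne m).mp hle⟩
  · intro h m hm
    obtain ⟨i, j, hij, h1, h2⟩ := h m hm
    exact ⟨_, ⟨i, j, hij, rfl⟩, (key i j hij.ne m).mpr ⟨h1, h2⟩⟩

lemma PIdeal_mono {A : Type*} [CommRing A] {S T : Finset V} {δ ε : V → ℕ}
    (h : WVCle T ε S δ) : PIdeal A T ε ≤ PIdeal A S δ := by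
  unfold PIdeal
  rw [Ideal.span_le]
  rintro g ⟨v, hv, rfl⟩
  have h1 : δ v ≤ ε v := h.2 v hv
  have hg : (X v : MvPolynomial V A) ^ ε v = X v ^ δ v * X v ^ (ε v - δ v) := by
    rw [← pow_add]
    congr 1
    omega
  simp only [SetLike.mem_coe]
  rw [hg]
  exact Ideal.mul_mem_right _ _ (Ideal.subset_span ⟨v, h.1 hv, rfl⟩)

end Aux4

/-- the weighted edge ideal is the intersection of the `P(V', δ')`
over all (resp. all minimal) weighted vertex covers, and the second
decomposition is irredundant. -/
theorem stmt_4 (A : Type*) [CommRing A] [Nontrivial A] {V : Type*} [Fintype V]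
    (G : SimpleGraph V) (w : Sym2 V → ℕ) (hw : ∀ e ∈ G.edgeSet, 1 ≤ w e) :
    wEdgeIdeal A G w = sInf {I | ∃ S δ, IsWVC G w S δ ∧ I = PIdeal A S δ} ∧
    wEdgeIdeal A G w = sInf {I | ∃ S δ, IsMinWVC G w S δ ∧ I = PIdeal A S δ} ∧
    (∀ S δ T ε, IsMinWVC G w S δ → IsMinWVC G w T ε →
      PIdeal A S δ ≤ PIdeal A T ε → S = T ∧ ∀ v ∈ S, δ v = ε v) := by
  classical
  have covP : ∀ S δ, IsWVC G w S δ → wEdgeIdeal A G w ≤ PIdeal A S δ := by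
    intro S δ hSδ
    rw [SetLike.le_def]
    intro f hf
    rw [mem_wEdgeIdeal_iff] at hf
    rw [mem_PIdeal_iff]
    intro m hm
    obtain ⟨i, j, hij, h1, h2⟩ := hf m hm
    rcases hSδ.2 i j hij with ⟨hi, hle⟩ | ⟨hj, hle⟩
    · exact ⟨i, hi, hle.trans h1⟩
    · exact ⟨j, hj, hle.trans h2⟩
  have eq1 : wEdgeIdeal A G w = sInf {I | ∃ S δ, IsWVC G w S δ ∧ I = PIdeal A S δ} := by
    apply le_antisymm
    · apply le_sInf
      rintro I ⟨S, δ, hSδ, rfl⟩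
      exact covP S δ hSδ
    · rw [SetLike.le_def]
      intro f hf
      rw [mem_wEdgeIdeal_iff]
      intro m hm
      by_contra hcon
      have hcov : IsWVC G w Finset.univ (fun v => m v + 1) := by
        refine ⟨fun v _ => Nat.le_add_left 1 (m v), ?_⟩
        intro i j hij
        have : m i < w s(i, j) ∨ m j < w s(i, j) := by
          by_contra hc
          push_neg at hc
          exact hcon ⟨i, j, hij, hc.1, hc.2⟩
        rcases this with h1 | h1
        · exact Or.inl ⟨Finset.mem_univ i, h1⟩
        · exact Or.inr ⟨Finset.mem_univ j, h1⟩
      have hfP : f ∈ PIdeal A Finset.univ (fun v => m v + 1) :=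
        Ideal.mem_sInf.mp hf ⟨Finset.univ, fun v => m v + 1, hcov, rfl⟩
      rw [mem_PIdeal_iff] at hfP
      obtain ⟨v, _, hv⟩ := hfP m hm
      omega
  have eq2 : wEdgeIdeal A G w = sInf {I | ∃ S δ, IsMinWVC G w S δ ∧ I = PIdeal A S δ} := by
    apply le_antisymm
    · apply le_sInf
      rintro I ⟨S, δ, hSδ, rfl⟩
      exact covP S δ hSδ.1
    · rw [eq1]
      apply le_sInf
      rintro I ⟨S, δ, hSδ, rfl⟩
      obtain ⟨T, ε, hmin, hle⟩ := exists_min_below G w hSδ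
      exact le_trans (sInf_le ⟨T, ε, hmin, rfl⟩) (PIdeal_mono hle)
  refine ⟨eq1, eq2, ?_⟩
  intro S δ T ε hS hT hle
  have key : ∀ v ∈ S, v ∈ T ∧ ε v ≤ δ v := by
    intro v hv
    have hx : (X v : MvPolynomial V A) ^ δ v ∈ PIdeal A T ε :=
      hle (Ideal.subset_span ⟨v, hv, rfl⟩)
    rw [mem_PIdeal_iff] at hx
    obtain ⟨u, hu, hval⟩ := hx _ (by rw [support_X_pow]; exact Finset.mem_singleton_self _)
    by_cases huv : u = v
    · subst huv
      exact ⟨hu, by simpa using hval⟩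
    · exfalso
      have h0 : (Finsupp.single v (δ v) : V →₀ ℕ) u = 0 :=
        Finsupp.single_eq_of_ne huv
      have h1 : 1 ≤ ε u := hT.1.1 u hu
      rw [h0] at hval
      omega
  have hST : WVCle S δ T ε := ⟨fun v hv => (key v hv).1, fun v hv => (key v hv).2⟩
  have hback := hT.2 S δ hS.1 hST
  refine ⟨Finset.Subset.antisymm hST.1 hback.1, fun v hv => le_antisymm ?_ (hST.2 v hv)⟩
  exact hback.2 v (hST.1 hv)
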